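/- Completeness of the enabledness calculus: for every formula χ ∈ L_ME, if ⊨_ME χ (χ holds at every pair of a mental state and a set E ⊆ Bcap of enabled belief capabilities) then ⊢_ME χ. Equivalently, every ⊢_ME-consistent L_ME-formula is satisfied by some mental state together with some E ⊆ Bcap. -/

import Mathlib

/- Core: propositional language, classical entailment, mental states,
   mental state formulas and their semantics. -/

inductive PForm : Type where
  | atom : Nat → PForm
  | fals : PForm
  | impl : PForm → PForm → PForm

namespace PForm

def neg (p : PForm) : PForm := p.impl PForm.fals

def conj (p q : PForm) : PForm := (p.impl q.neg).neg

def iffF (p q : PForm) : PForm := (p.impl q).conj (q.impl p)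

def eval (v : Nat → Bool) : PForm → Bool
  | atom n => v n
  | fals => false
  | impl p q => !(p.eval v) || q.eval v

end PForm

/-- Classical semantic entailment `Γ ⊨_C φ`. -/
def CEntails (Γ : Set PForm) (φ : PForm) : Prop :=
  ∀ v : Nat → Bool, (∀ ψ ∈ Γ, ψ.eval v = true) → φ.eval v = true

/-- `⊨_C φ`. -/
def Taut (φ : PForm) : Prop := CEntails ∅ φ

/-- A pair ⟨Σ,Γ⟩ of a belief base and a goal base. -/
structure MState : Type where
  bel : Set PForm
  goals : Set PForm

/-- The conditions making a pair ⟨Σ,Γ⟩ a mental state. -/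
def IsMState (m : MState) : Prop :=
  ¬ CEntails m.bel PForm.fals ∧
  ∀ γ ∈ m.goals,
    (¬ CEntails m.bel γ ∧ ¬ Taut γ.neg) ∧
    ∀ γ' : PForm, Taut (γ.impl γ') → ¬ CEntails m.bel γ' → ¬ Taut γ'.neg →
      γ' ∈ m.goals

/-- Mental state formulas: Boolean combinations of atoms `B φ` and `G φ`. -/
inductive MForm : Type where
  | B : PForm → MForm
  | G : PForm → MForm
  | fals : MForm
  | impl : MForm → MForm → MForm

namespace MForm

def neg (χ : MForm) : MForm := χ.impl MForm.fals
def conj (a b : MForm) : MForm := (a.impl b.neg).neg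
def disj (a b : MForm) : MForm := a.neg.impl b
def iffF (a b : MForm) : MForm := (a.impl b).conj (b.impl a)

end MForm

/-- Truth of a mental state formula in a mental state: `⟨Σ,Γ⟩ ⊨_M χ`. -/
def MSat (m : MState) : MForm → Prop
  | .B φ => CEntails m.bel φ
  | .G φ => φ ∈ m.goals
  | .fals => False
  | .impl a b => MSat m a → MSat m b

/-- `⊨_M χ`: truth in every mental state. -/
def MValid (χ : MForm) : Prop := ∀ m : MState, IsMState m → MSat m χ

/- Capabilities, the language L_ME and the system ⊢_ME. -/

/-- Capabilities: belief-update capabilities, adopt and drop. -/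
inductive Cap (β : Type) : Type where
  | bcap : β → Cap β
  | adopt : PForm → Cap β
  | drop : PForm → Cap β

/-- L_ME: mental state formulas plus enabledness atoms for capabilities and
for conditional actions `ψ → do(a)` (with `ψ ∈ L_M`). -/
inductive MEForm (β : Type) : Type where
  | B : PForm → MEForm β
  | G : PForm → MEForm β
  | en : Cap β → MEForm β
  | enC : MForm → Cap β → MEForm β
  | fals : MEForm β
  | impl : MEForm β → MEForm β → MEForm β

namespace MEForm

def neg {β : Type} (χ : MEForm β) : MEForm β := χ.impl MEForm.fals
def conj {β : Type} (a b : MEForm β) : MEForm β := (a.impl b.neg).neg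
def iffF {β : Type} (a b : MEForm β) : MEForm β := (a.impl b).conj (b.impl a)

end MEForm

/-- Embedding of L_M into L_ME. -/
def mfToME {β : Type} : MForm → MEForm β
  | .B φ => .B φ
  | .G φ => .G φ
  | .fals => .fals
  | .impl a b => (mfToME a).impl (mfToME b)

/-- Enabledness of a capability relative to a mental state and a set
`E ⊆ Bcap` of enabled belief capabilities. -/
def capEnabled {β : Type} (m : MState) (E : Set β) : Cap β → Prop
  | .bcap a => a ∈ E
  | .drop _ => True
  | .adopt φ => ¬ Taut φ.neg ∧ ¬ CEntails m.bel φ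

/-- Truth of an L_ME formula at a pair of a mental state and a set of
enabled belief capabilities. -/
def MESat {β : Type} (m : MState) (E : Set β) : MEForm β → Prop
  | .B φ => CEntails m.bel φ
  | .G φ => φ ∈ m.goals
  | .en a => capEnabled m E a
  | .enC ψ a => MSat m ψ ∧ capEnabled m E a
  | .fals => False
  | .impl a b => MESat m E a → MESat m E b

/-- `⊨_ME χ`. -/
def MEValid {β : Type} (χ : MEForm β) : Prop :=
  ∀ (m : MState) (E : Set β), IsMState m → MESat m E χ

/-- Evaluation of an L_ME formula treating `B φ`, `G φ`, `enabled(a)` and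
`enabled(ψ → do(a))` as propositional atoms. -/
def MEForm.evalAt {β : Type} (vB vG : PForm → Bool) (vC : Cap β → Bool)
    (vK : MForm → Cap β → Bool) : MEForm β → Bool
  | .B φ => vB φ
  | .G φ => vG φ
  | .en a => vC a
  | .enC ψ a => vK ψ a
  | .fals => false
  | .impl a b => !(a.evalAt vB vG vC vK) || b.evalAt vB vG vC vK

/-- The system ⊢_ME. -/
inductive MEProv {β : Type} : MEForm β → Prop where
  | taut (χ : MEForm β) :
      (∀ (vB vG : PForm → Bool) (vC : Cap β → Bool)
        (vK : MForm → Cap β → Bool), χ.evalAt vB vG vC vK = true) → MEProv χ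
  | r2 (φ : PForm) : Taut φ → MEProv (MEForm.B (β := β) φ)
  | a1 (φ ψ : PForm) :
      MEProv ((MEForm.B (β := β) (φ.impl ψ)).impl
        ((MEForm.B φ).impl (MEForm.B ψ)))
  | a2 : MEProv (MEForm.B (β := β) PForm.fals).neg
  | a3 : MEProv (MEForm.G (β := β) PForm.fals).neg
  | a4 (φ : PForm) : MEProv ((MEForm.B (β := β) φ).impl (MEForm.G φ).neg)
  | a5 (φ ψ : PForm) : Taut (φ.impl ψ) →
      MEProv ((MEForm.B (β := β) ψ).neg.impl
        ((MEForm.G φ).impl (MEForm.G ψ)))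
  | e1 (ψ : MForm) (a : Cap β) :
      MEProv ((MEForm.enC ψ a).iffF ((mfToME ψ).conj (MEForm.en a)))
  | e2 (φ : PForm) : MEProv (MEForm.en (β := β) (Cap.drop φ))
  | r3 (φ : PForm) : ¬ Taut φ.neg →
      MEProv ((MEForm.B (β := β) φ).neg.iffF (MEForm.en (Cap.adopt φ)))
  | r4 (φ : PForm) : Taut φ.neg →
      MEProv (MEForm.en (β := β) (Cap.adopt φ)).neg
  | mp (χ₁ χ₂ : MEForm β) : MEProv (χ₁.impl χ₂) → MEProv χ₁ → MEProv χ₂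

set_option linter.unusedSectionVars false

section MECompleteness
open Classical

lemma pfoldr_eval (v : Nat → Bool) (l : List PForm) (φ : PForm) :
    (l.foldr PForm.impl φ).eval v = (!(l.all fun x => x.eval v) || φ.eval v) := by
  induction l with
  | nil => simp [PForm.eval]
  | cons x l ih => simp [PForm.eval, ih, Bool.or_assoc]

lemma continuous_eval (ψ : PForm) : Continuous fun v : Nat → Bool => ψ.eval v := by
  induction ψ with
  | atom n => exact continuous_apply n
  | fals => exact continuous_const
  | impl p q ihp ihq =>
      exact Continuous.comp (g := fun p : Bool × Bool => !p.1 || p.2)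
        continuous_of_discreteTopology (ihp.prodMk ihq)

theorem pcompact (S : Set PForm) (φ : PForm) (h : CEntails S φ) :
    ∃ l : List PForm, (∀ ψ ∈ l, ψ ∈ S) ∧ Taut (l.foldr PForm.impl φ) := by
  classical
  by_contra hno
  push_neg at hno
  have key : ∀ l : List PForm, (∀ ψ ∈ l, ψ ∈ S) →
      ∃ v : Nat → Bool, (∀ ψ ∈ l, ψ.eval v = true) ∧ φ.eval v = false := by
    intro l hl
    have := hno l hl
    unfold Taut CEntails at this
    push_neg at this
    obtain ⟨v, -, hv⟩ := this
    rw [pfoldr_eval] at hv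
    have hall : (l.all fun x => x.eval v) = true := by
      by_contra hc
      simp [Bool.not_eq_true] at hc
      simp [hc] at hv
    have hφf : φ.eval v = false := by
      by_contra hc
      simp [Bool.not_eq_false] at hc
      simp [hc] at hv
    rw [List.all_eq_true] at hall
    exact ⟨v, fun ψ hψ => hall ψ hψ, hφf⟩
  set T : Set PForm := insert φ.neg S with hT
  let Z : T → Set (Nat → Bool) := fun ψ => {v | (ψ : PForm).eval v = true}
  have hZc : ∀ i, IsClosed (Z i) := by
    intro i
    exact IsClosed.preimage (continuous_eval i.1) (isClosed_discrete {true})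
  by_cases hint : (Set.univ ∩ ⋂ i, Z i) = ∅
  · obtain ⟨t, ht⟩ := IsCompact.elim_finite_subfamily_closed isCompact_univ Z hZc hint
    let l : List PForm := (t.toList.map Subtype.val).filter (fun x => x ≠ φ.neg)
    have hlS : ∀ ψ ∈ l, ψ ∈ S := by
      intro ψ hψ
      simp only [l, List.mem_filter, List.mem_map] at hψ
      obtain ⟨⟨⟨x, hx⟩, -, rfl⟩, hne⟩ := hψ
      simp only [decide_eq_true_eq] at hne
      rcases hx with hx | hx
      · exact absurd hx hne
      · exact hx
    obtain ⟨v, hv1, hv2⟩ := key l hlS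
    have hvZ : v ∈ Set.univ ∩ ⋂ i ∈ t, Z i := by
      refine ⟨trivial, ?_⟩
      simp only [Set.mem_iInter]
      intro i hi
      show (i : PForm).eval v = true
      rcases i with ⟨x, hx⟩
      by_cases hxe : x = φ.neg
      · subst hxe
        simp [PForm.neg, PForm.eval, hv2]
      · apply hv1
        simp only [l, List.mem_filter, List.mem_map]
        refine ⟨⟨⟨x, hx⟩, ?_, rfl⟩, by simp [hxe]⟩
        simp [Finset.mem_toList, hi]
    rw [ht] at hvZ
    exact hvZ
  · have : ∃ v, v ∈ Set.univ ∩ ⋂ i, Z i := by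
      rcases Set.eq_empty_or_nonempty (Set.univ ∩ ⋂ i, Z i) with he | hne
      · exact absurd he hint
      · exact hne
    obtain ⟨v, -, hv⟩ := this
    simp only [Set.mem_iInter] at hv
    have hφ : φ.eval v = true := by
      apply h
      intro ψ hψ
      exact hv ⟨ψ, Or.inr hψ⟩
    have hφn : (φ.neg).eval v = true := hv ⟨φ.neg, Or.inl rfl⟩
    simp [PForm.neg, PForm.eval, hφ] at hφn

variable {β : Type}

lemma mefoldr_eval (vB vG : PForm → Bool) (vC : Cap β → Bool)
    (vK : MForm → Cap β → Bool) (l : List (MEForm β)) (χ : MEForm β) :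
    (l.foldr MEForm.impl χ).evalAt vB vG vC vK =
      (!(l.all fun x => x.evalAt vB vG vC vK) || χ.evalAt vB vG vC vK) := by
  induction l with
  | nil => simp [MEForm.evalAt]
  | cons x l ih => simp [MEForm.evalAt, ih, Bool.or_assoc]

/-- Derivability from a set of hypotheses. -/
def Der (Δ : Set (MEForm β)) (χ : MEForm β) : Prop :=
  ∃ l : List (MEForm β), (∀ x ∈ l, x ∈ Δ) ∧ MEProv (l.foldr MEForm.impl χ)

lemma der_of_prov {Δ : Set (MEForm β)} {χ : MEForm β} (h : MEProv χ) : Der Δ χ :=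
  ⟨[], by simp, h⟩

lemma der_of_mem {Δ : Set (MEForm β)} {χ : MEForm β} (h : χ ∈ Δ) : Der Δ χ := by
  refine ⟨[χ], by simpa using h, ?_⟩
  apply MEProv.taut
  intro vB vG vC vK
  simp [MEForm.evalAt]

lemma der_mono {Δ Δ' : Set (MEForm β)} {χ : MEForm β} (hs : Δ ⊆ Δ')
    (h : Der Δ χ) : Der Δ' χ := by
  obtain ⟨l, hl, hp⟩ := h
  exact ⟨l, fun x hx => hs (hl x hx), hp⟩

lemma der_mp {Δ : Set (MEForm β)} {a b : MEForm β}
    (hab : Der Δ (a.impl b)) (ha : Der Δ a) : Der Δ b := by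
  obtain ⟨l₁, hl₁, hp₁⟩ := hab
  obtain ⟨l₂, hl₂, hp₂⟩ := ha
  refine ⟨l₁ ++ l₂, ?_, ?_⟩
  · intro x hx
    rcases List.mem_append.mp hx with h | h
    · exact hl₁ x h
    · exact hl₂ x h
  · have htaut : MEProv ((l₁.foldr MEForm.impl (a.impl b)).impl
        ((l₂.foldr MEForm.impl a).impl ((l₁ ++ l₂).foldr MEForm.impl b))) := by
      apply MEProv.taut
      intro vB vG vC vK
      simp only [MEForm.evalAt, mefoldr_eval, List.all_append]
      generalize (l₁.all fun x => x.evalAt vB vG vC vK) = x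
      generalize (l₂.all fun x => x.evalAt vB vG vC vK) = y
      generalize a.evalAt vB vG vC vK = A
      generalize b.evalAt vB vG vC vK = B
      revert x y A B
      decide
    exact MEProv.mp _ _ (MEProv.mp _ _ htaut hp₁) hp₂

lemma all_filter_ne (e : MEForm β → Bool) (a : MEForm β) (l : List (MEForm β))
    (h : e a = true) :
    l.all e = (l.filter (fun x => x ≠ a)).all e := by
  induction l with
  | nil => simp
  | cons x l ih =>
    by_cases hx : x = a
    · subst hx
      simp [List.filter, h, ih]
    · simp [List.filter, hx, ih]

/-- Deduction theorem. -/
lemma der_deduction {Δ : Set (MEForm β)} {a χ : MEForm β}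
    (h : Der (insert a Δ) χ) : Der Δ (a.impl χ) := by
  obtain ⟨l, hl, hp⟩ := h
  refine ⟨l.filter (fun x => x ≠ a), ?_, ?_⟩
  · intro x hx
    simp only [List.mem_filter, decide_eq_true_eq] at hx
    rcases hl x hx.1 with h | h
    · exact absurd h hx.2
    · exact h
  · have htaut : MEProv ((l.foldr MEForm.impl χ).impl
        ((l.filter (fun x => x ≠ a)).foldr MEForm.impl (a.impl χ))) := by
      apply MEProv.taut
      intro vB vG vC vK
      set e : MEForm β → Bool := fun x => x.evalAt vB vG vC vK with he
      simp only [MEForm.evalAt, mefoldr_eval]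
      by_cases hA : e a = true
      · rw [← all_filter_ne e a l hA]
        show (!(!l.all e || e χ) || (!l.all e || (!e a || e χ))) = true
        cases hc : l.all e <;> cases hχ : e χ <;> simp [hc, hχ]
      · rw [Bool.not_eq_true] at hA
        show (!(!l.all e || e χ) ||
          (!(l.filter (fun x => x ≠ a)).all e || (!e a || e χ))) = true
        simp [hA]
    exact MEProv.mp _ _ htaut hp

/-- Consistency. -/
def MECon (Δ : Set (MEForm β)) : Prop := ¬ Der Δ MEForm.fals

lemma con_singleton {χ : MEForm β} (h : ¬ MEProv χ.neg) : MECon {χ} := by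
  intro ⟨l, hl, hp⟩
  apply h
  have htaut : MEProv ((l.foldr MEForm.impl MEForm.fals).impl χ.neg) := by
    apply MEProv.taut
    intro vB vG vC vK
    set e : MEForm β → Bool := fun x => x.evalAt vB vG vC vK with he
    simp only [MEForm.neg, MEForm.evalAt, mefoldr_eval]
    by_cases hχ : e χ = true
    · have hall : l.all e = true := by
        rw [List.all_eq_true]
        intro x hx
        have := hl x hx
        simp only [Set.mem_singleton_iff] at this
        rw [this]; exact hχ
      simp [hall, hχ, MEForm.evalAt]
      exact Or.inl (List.all_eq_true.mp hall)
    · rw [Bool.not_eq_true] at hχ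
      simp
      exact Or.inr hχ
  exact MEProv.mp _ _ htaut hp

lemma chain_list {c : Set (Set (MEForm β))} (hc : IsChain (· ⊆ ·) c)
    (hne : c.Nonempty) (l : List (MEForm β)) (hl : ∀ x ∈ l, x ∈ ⋃₀ c) :
    ∃ t ∈ c, ∀ x ∈ l, x ∈ t := by
  induction l with
  | nil => exact ⟨hne.choose, hne.choose_spec, by simp⟩
  | cons x l ih =>
    obtain ⟨t, htc, htl⟩ := ih (fun y hy => hl y (List.mem_cons_of_mem x hy))
    obtain ⟨s, hsc, hxs⟩ := hl x List.mem_cons_self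
    rcases eq_or_ne s t with rfl | hst
    · exact ⟨s, hsc, by
        intro y hy
        rcases List.mem_cons.mp hy with rfl | hy
        · exact hxs
        · exact htl y hy⟩
    · rcases hc hsc htc hst with hsub | hsub
      · exact ⟨t, htc, by
          intro y hy
          rcases List.mem_cons.mp hy with rfl | hy
          · exact hsub hxs
          · exact htl y hy⟩
      · exact ⟨s, hsc, by
          intro y hy
          rcases List.mem_cons.mp hy with rfl | hy
          · exact hxs
          · exact hsub (htl y hy)⟩

/-- Lindenbaum. -/
lemma lindenbaum {Δ₀ : Set (MEForm β)} (h : MECon Δ₀) :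
    ∃ Δ : Set (MEForm β), Δ₀ ⊆ Δ ∧ MECon Δ ∧
      ∀ Δ' : Set (MEForm β), Δ ⊆ Δ' → MECon Δ' → Δ' = Δ := by
  obtain ⟨Δ, hsub, hmax⟩ := zorn_subset_nonempty {Δ : Set (MEForm β) | MECon Δ}
    (fun c hcS hc hne => by
      refine ⟨⋃₀ c, ?_, fun s hs => Set.subset_sUnion_of_mem hs⟩
      intro ⟨l, hl, hp⟩
      obtain ⟨t, htc, htl⟩ := chain_list hc hne l hl
      exact hcS htc ⟨l, htl, hp⟩) Δ₀ h
  exact ⟨Δ, hsub, hmax.prop, fun Δ' h1 h2 => hmax.eq_of_ge h2 h1⟩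

/-! ### Maximal consistent sets -/

section MCS

variable {Δ : Set (MEForm β)} (hcon : MECon Δ)
  (hmax : ∀ Δ' : Set (MEForm β), Δ ⊆ Δ' → MECon Δ' → Δ' = Δ)

include hcon hmax

lemma mcs_closed {χ : MEForm β} (h : Der Δ χ) : χ ∈ Δ := by
  by_contra hχ
  have hins : ¬ MECon (insert χ Δ) := by
    intro hc
    have := hmax (insert χ Δ) (Set.subset_insert _ _) hc
    exact hχ (this ▸ Set.mem_insert χ Δ)
  rw [MECon, not_not] at hins
  exact hcon (der_mp (der_deduction hins) h)

lemma mcs_prov {χ : MEForm β} (h : MEProv χ) : χ ∈ Δ :=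
  mcs_closed hcon hmax (der_of_prov h)

lemma mcs_neg {χ : MEForm β} : χ.neg ∈ Δ ↔ χ ∉ Δ := by
  constructor
  · intro h hχ
    exact hcon (der_mp (der_of_mem h) (der_of_mem hχ))
  · intro hχ
    have hins : ¬ MECon (insert χ Δ) := by
      intro hc
      have := hmax (insert χ Δ) (Set.subset_insert _ _) hc
      exact hχ (this ▸ Set.mem_insert χ Δ)
    rw [MECon, not_not] at hins
    exact mcs_closed hcon hmax (der_deduction hins)

lemma mcs_fals : MEForm.fals ∉ Δ := fun h => hcon (der_of_mem h)

lemma mcs_impl {a b : MEForm β} : (a.impl b) ∈ Δ ↔ (a ∈ Δ → b ∈ Δ) := by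
  constructor
  · intro h ha
    exact mcs_closed hcon hmax (der_mp (der_of_mem h) (der_of_mem ha))
  · intro h
    by_cases ha : a ∈ Δ
    · have hb := h ha
      have ht : MEProv (b.impl (a.impl b)) := by
        apply MEProv.taut
        intro vB vG vC vK
        simp only [MEForm.evalAt]
        generalize a.evalAt vB vG vC vK = A
        generalize b.evalAt vB vG vC vK = B
        revert A B; decide
      exact mcs_closed hcon hmax (der_mp (der_of_prov ht) (der_of_mem hb))
    · have hna : a.neg ∈ Δ := (mcs_neg hcon hmax).mpr ha
      have ht : MEProv (a.neg.impl (a.impl b)) := by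
        apply MEProv.taut
        intro vB vG vC vK
        simp only [MEForm.neg, MEForm.evalAt]
        generalize a.evalAt vB vG vC vK = A
        generalize b.evalAt vB vG vC vK = B
        revert A B; decide
      exact mcs_closed hcon hmax (der_mp (der_of_prov ht) (der_of_mem hna))

lemma mcs_conj {a b : MEForm β} : (a.conj b) ∈ Δ ↔ a ∈ Δ ∧ b ∈ Δ := by
  show ((a.impl b.neg).neg) ∈ Δ ↔ _
  rw [mcs_neg hcon hmax, mcs_impl hcon hmax, mcs_neg hcon hmax]
  tauto

lemma mcs_iff {a b : MEForm β} (h : (a.iffF b) ∈ Δ) : a ∈ Δ ↔ b ∈ Δ := by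
  rw [MEForm.iffF, mcs_conj hcon hmax, mcs_impl hcon hmax, mcs_impl hcon hmax] at h
  exact ⟨h.1, h.2⟩

/-! ### The canonical model -/

/-- Derived belief from a list of believed formulas. -/
lemma bder (l : List PForm) (φ : PForm) (hl : ∀ ψ ∈ l, MEForm.B (β := β) ψ ∈ Δ)
    (ht : Taut (l.foldr PForm.impl φ)) : (MEForm.B (β := β) φ) ∈ Δ := by
  induction l generalizing φ with
  | nil => exact mcs_prov hcon hmax (MEProv.r2 φ ht)
  | cons ψ l ih =>
    have heq : ∀ v : Nat → Bool,
        (((ψ :: l).foldr PForm.impl φ).eval v) = ((l.foldr PForm.impl (ψ.impl φ)).eval v) := by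
      intro v
      show ((ψ.impl (l.foldr PForm.impl φ)).eval v) = _
      rw [pfoldr_eval]
      simp only [PForm.eval, pfoldr_eval]
      generalize (l.all fun x => x.eval v) = x
      generalize ψ.eval v = A
      generalize φ.eval v = B
      revert x A B; decide
    have ht' : Taut (l.foldr PForm.impl (ψ.impl φ)) := by
      intro v hv
      rw [← heq]
      exact ht v hv
    have hB := ih (ψ.impl φ) (fun x hx => hl x (List.mem_cons_of_mem ψ hx)) ht'
    have hψ := hl ψ List.mem_cons_self
    exact mcs_closed hcon hmax
      (der_mp (der_mp (der_of_prov (MEProv.a1 ψ φ)) (der_of_mem hB)) (der_of_mem hψ))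

lemma sigma_B (φ : PForm) :
    (MEForm.B (β := β) φ) ∈ Δ ↔ CEntails {ψ | MEForm.B (β := β) ψ ∈ Δ} φ := by
  constructor
  · intro h v hv
    exact hv φ h
  · intro h
    obtain ⟨l, hl, ht⟩ := pcompact _ φ h
    exact bder hcon hmax l φ hl ht

/-- The canonical mental state. -/
lemma canonical_mstate :
    IsMState ⟨{ψ | MEForm.B (β := β) ψ ∈ Δ}, {γ | MEForm.G (β := β) γ ∈ Δ}⟩ := by
  constructor
  · intro h
    have hB : (MEForm.B (β := β) PForm.fals) ∈ Δ := (sigma_B hcon hmax _).mpr h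
    exact (mcs_neg hcon hmax).mp (mcs_prov hcon hmax MEProv.a2) hB
  · intro γ hγ
    refine ⟨⟨?_, ?_⟩, ?_⟩
    · intro hce
      have hB : (MEForm.B (β := β) γ) ∈ Δ := (sigma_B hcon hmax _).mpr hce
      have := (mcs_impl hcon hmax).mp (mcs_prov hcon hmax (MEProv.a4 γ)) hB
      exact (mcs_neg hcon hmax).mp this hγ
    · intro ht
      have h5 := mcs_prov hcon hmax (MEProv.a5 (β := β) γ PForm.fals ht)
      have hnb : (MEForm.B (β := β) PForm.fals).neg ∈ Δ :=
        mcs_prov hcon hmax MEProv.a2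
      have hGf : (MEForm.G (β := β) PForm.fals) ∈ Δ :=
        (mcs_impl hcon hmax).mp ((mcs_impl hcon hmax).mp h5 hnb) hγ
      exact (mcs_neg hcon hmax).mp (mcs_prov hcon hmax MEProv.a3) hGf
    · intro γ' ht hnc hnt
      have hnB : (MEForm.B (β := β) γ') ∉ Δ := by
        intro hb
        exact hnc ((sigma_B hcon hmax _).mp hb)
      have hnB' : (MEForm.B (β := β) γ').neg ∈ Δ := (mcs_neg hcon hmax).mpr hnB
      have h5 := mcs_prov hcon hmax (MEProv.a5 (β := β) γ γ' ht)
      exact (mcs_impl hcon hmax).mp ((mcs_impl hcon hmax).mp h5 hnB') hγ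

lemma en_iff (a : Cap β) :
    (MEForm.en a ∈ Δ) ↔ capEnabled
      ⟨{ψ | MEForm.B (β := β) ψ ∈ Δ}, {γ | MEForm.G (β := β) γ ∈ Δ}⟩
      {b | MEForm.en (Cap.bcap b) ∈ Δ} a := by
  cases a with
  | bcap b => exact Iff.rfl
  | drop φ =>
    simp only [capEnabled, iff_true]
    exact mcs_prov hcon hmax (MEProv.e2 φ)
  | adopt φ =>
    by_cases ht : Taut φ.neg
    · have := (mcs_neg hcon hmax).mp (mcs_prov hcon hmax (MEProv.r4 φ ht))
      simp only [capEnabled]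
      constructor
      · intro h; exact absurd h this
      · intro h; exact absurd ht h.1
    · have h3 := mcs_iff hcon hmax (mcs_prov hcon hmax (MEProv.r3 φ ht))
      rw [mcs_neg hcon hmax] at h3
      simp only [capEnabled]
      rw [← h3, sigma_B hcon hmax]
      tauto

lemma mf_iff (ψ : MForm) :
    ((mfToME ψ : MEForm β) ∈ Δ) ↔ MSat
      ⟨{ψ | MEForm.B (β := β) ψ ∈ Δ}, {γ | MEForm.G (β := β) γ ∈ Δ}⟩ ψ := by
  induction ψ with
  | B φ => exact sigma_B hcon hmax φ
  | G φ => exact Iff.rfl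
  | fals =>
    simp only [mfToME, MSat, iff_false]
    exact mcs_fals hcon hmax
  | impl a b iha ihb =>
    simp only [mfToME, MSat]
    rw [mcs_impl hcon hmax, iha, ihb]

lemma truth_lemma (χ : MEForm β) :
    (χ ∈ Δ) ↔ MESat
      ⟨{ψ | MEForm.B (β := β) ψ ∈ Δ}, {γ | MEForm.G (β := β) γ ∈ Δ}⟩
      {b | MEForm.en (Cap.bcap b) ∈ Δ} χ := by
  induction χ with
  | B φ => exact sigma_B hcon hmax φ
  | G φ => exact Iff.rfl
  | en a => exact en_iff hcon hmax a
  | enC ψ a =>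
    have h1 := mcs_iff hcon hmax (mcs_prov hcon hmax (MEProv.e1 ψ a))
    rw [h1, mcs_conj hcon hmax]
    show _ ↔ (MSat _ ψ ∧ capEnabled _ _ a)
    rw [mf_iff hcon hmax, en_iff hcon hmax]
  | fals =>
    simp only [MESat, iff_false]
    exact mcs_fals hcon hmax
  | impl a b iha ihb =>
    show _ ↔ (MESat _ _ a → MESat _ _ b)
    rw [mcs_impl hcon hmax, iha, ihb]

end MCS

theorem me_sat_of_con {χ : MEForm β} (h : ¬ MEProv χ.neg) :
    ∃ (m : MState) (E : Set β), IsMState m ∧ MESat m E χ := by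
  obtain ⟨Δ, hsub, hcon, hmax⟩ := lindenbaum (con_singleton h)
  have hχ : χ ∈ Δ := hsub rfl
  exact ⟨_, _, canonical_mstate hcon hmax, (truth_lemma hcon hmax χ).mp hχ⟩

end MECompleteness


/-- Completeness of the enabledness calculus ⊢_ME; equivalently,
every ⊢_ME-consistent L_ME-formula is satisfied by some mental state together
with some set of enabled belief capabilities. -/
theorem meprov_complete (β : Type) :
    (∀ χ : MEForm β, MEValid χ → MEProv χ) ∧
    (∀ χ : MEForm β, ¬ MEProv χ.neg →
      ∃ (m : MState) (E : Set β), IsMState m ∧ MESat m E χ) := by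
  constructor
  · intro χ hval
    by_contra hnp
    have hnn : ¬ MEProv χ.neg.neg := by
      intro hp
      apply hnp
      have ht : MEProv (χ.neg.neg.impl χ) := by
        apply MEProv.taut
        intro vB vG vC vK
        simp only [MEForm.neg, MEForm.evalAt]
        generalize χ.evalAt vB vG vC vK = A
        revert A; decide
      exact MEProv.mp _ _ ht hp
    obtain ⟨m, E, hm, hsat⟩ := me_sat_of_con hnn
    exact hsat (hval m E hm)
  · intro χ h
    exact me_sat_of_con h
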